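/- Fundamental inequality of Online Mirror Descent on the simplex with KL divergence: Let g_1, ..., g_K ∈ R^d with g_{k,i} ≥ 0 for all k, i, let x_1 = (1/d, ..., 1/d) be the uniform distribution, and let x_{k+1} = argmin_{x ∈ Δ_d} { t ⟨g_k, x − x_k⟩ + KL(x ‖ x_k) } with step size t > 0. Then for any u ∈ Δ_d: Σ_{k=1}^K ⟨g_k, x_k − u⟩ ≤ (log d)/t + (t/2) Σ_{k=1}^K Σ_{i=1}^d x_{k,i} g_{k,i}². -/

import Mathlib

open Finset

lemma exp_neg_le_quad {a : ℝ} (ha : 0 ≤ a) :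
    Real.exp (-a) ≤ 1 - a + a ^ 2 / 2 := by
  have h1 : 1 + a + a ^ 2 / 2 ≤ Real.exp a := Real.quadratic_le_exp_of_nonneg ha
  have he : 0 < Real.exp (-a) := Real.exp_pos _
  have hmul : Real.exp (-a) * Real.exp a = 1 := by
    rw [← Real.exp_add]; simp
  have h2 : Real.exp (-a) * (1 + a + a ^ 2 / 2) ≤ 1 := by
    calc Real.exp (-a) * (1 + a + a ^ 2 / 2) ≤ Real.exp (-a) * Real.exp a :=
          mul_le_mul_of_nonneg_left h1 he.le
      _ = 1 := hmul
  nlinarith [sq_nonneg a, sq_nonneg (a * a), sq_nonneg (a - 1)]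

/-- Fundamental inequality of OMD on the simplex with KL divergence:
with nonnegative losses, uniform initialization and the entropic-mirror update
`x_{k+1,i} = x_{k,i} exp(−t g_{k,i}) / Σ_j x_{k,j} exp(−t g_{k,j})`, for any `u ∈ Δ_d`,
`Σ_{k<K} ⟨g_k, x_k − u⟩ ≤ (log d)/t + (t/2) Σ_{k<K} Σ_i x_{k,i} g_{k,i}²`. -/
theorem omd_fundamental_inequality
    (d K : ℕ) (hd : 0 < d) (t : ℝ) (ht : 0 < t)
    (g : ℕ → Fin d → ℝ) (hg : ∀ k i, 0 ≤ g k i)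
    (x : ℕ → Fin d → ℝ)
    (hx0 : ∀ i, x 0 i = 1 / d)
    (hupd : ∀ k i, x (k + 1) i =
      x k i * Real.exp (-t * g k i) / ∑ j, x k j * Real.exp (-t * g k j))
    (u : Fin d → ℝ) (hu : ∀ i, 0 ≤ u i) (husum : ∑ i, u i = 1) :
    ∑ k ∈ Finset.range K, ∑ i, g k i * (x k i - u i)
      ≤ Real.log d / t + t / 2 * ∑ k ∈ Finset.range K, ∑ i, x k i * (g k i) ^ 2 := by
  have hd' : (0 : ℝ) < d := by exact_mod_cast hd
  set Z : ℕ → ℝ := fun k => ∑ j, x k j * Real.exp (-t * g k j) with hZ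
  -- positivity of x
  have hxpos : ∀ k i, 0 < x k i := by
    intro k
    induction k with
    | zero => intro i; rw [hx0]; positivity
    | succ n ih =>
      intro i
      have hZpos : 0 < Z n := by
        apply Finset.sum_pos
        · intro j _; exact mul_pos (ih j) (Real.exp_pos _)
        · have : Nonempty (Fin d) := Fin.pos_iff_nonempty.mp hd
          exact Finset.univ_nonempty
      rw [hupd]
      exact div_pos (mul_pos (ih i) (Real.exp_pos _)) hZpos
  have hZpos : ∀ k, 0 < Z k := by
    intro k
    apply Finset.sum_pos
    · intro j _; exact mul_pos (hxpos k j) (Real.exp_pos _)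
    · have : Nonempty (Fin d) := Fin.pos_iff_nonempty.mp hd
      exact Finset.univ_nonempty
  -- x sums to 1
  have hxsum : ∀ k, ∑ i, x k i = 1 := by
    intro k
    induction k with
    | zero =>
      simp only [hx0]
      rw [Finset.sum_const, Finset.card_univ, Fintype.card_fin, nsmul_eq_mul]
      field_simp
    | succ n ih =>
      have h : ∑ i, x (n + 1) i = ∑ i, x n i * Real.exp (-t * g n i) / Z n :=
        Finset.sum_congr rfl fun i _ => hupd n i
      rw [h, ← Finset.sum_div]; exact div_self (hZpos n).ne'
  -- x ≤ 1, so log x ≤ 0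
  have hxle1 : ∀ k i, x k i ≤ 1 := by
    intro k i
    calc x k i ≤ ∑ j, x k j :=
          Finset.single_le_sum (fun j _ => (hxpos k j).le) (Finset.mem_univ i)
      _ = 1 := hxsum k
  -- step inequality: t * A_k + log Z_k ≤ t^2/2 * S_k
  have hstep : ∀ k, t * (∑ i, g k i * x k i) + Real.log (Z k)
      ≤ t ^ 2 / 2 * ∑ i, x k i * (g k i) ^ 2 := by
    intro k
    have hZub : Z k ≤ 1 - t * (∑ i, g k i * x k i) + t ^ 2 / 2 * ∑ i, x k i * (g k i) ^ 2 := by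
      have hterm : ∀ i, x k i * Real.exp (-t * g k i)
          ≤ x k i * (1 - t * g k i + (t * g k i) ^ 2 / 2) := by
        intro i
        apply mul_le_mul_of_nonneg_left _ (hxpos k i).le
        have := exp_neg_le_quad (mul_nonneg ht.le (hg k i))
        rw [neg_mul]; exact this
      calc Z k ≤ ∑ i, x k i * (1 - t * g k i + (t * g k i) ^ 2 / 2) :=
            Finset.sum_le_sum fun i _ => hterm i
        _ = (∑ i, x k i) - t * (∑ i, g k i * x k i)
            + t ^ 2 / 2 * ∑ i, x k i * (g k i) ^ 2 := by
            rw [Finset.mul_sum, Finset.mul_sum, ← Finset.sum_sub_distrib,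
              ← Finset.sum_add_distrib]
            exact Finset.sum_congr rfl fun i _ => by ring
        _ = 1 - t * (∑ i, g k i * x k i) + t ^ 2 / 2 * ∑ i, x k i * (g k i) ^ 2 := by
            rw [hxsum k]
    have hlog : Real.log (Z k) ≤ Z k - 1 := Real.log_le_sub_one_of_pos (hZpos k)
    linarith
  -- telescoping: log (x n i) = log (1/d) - ∑_{k<n} (t * g k i + log (Z k))
  have htel : ∀ i n, Real.log (x n i)
      = Real.log (1 / d) - ∑ k ∈ Finset.range n, (t * g k i + Real.log (Z k)) := by
    intro i n
    induction n with
    | zero => simp [hx0]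
    | succ m ih =>
      rw [Finset.sum_range_succ, hupd m i,
        Real.log_div (mul_pos (hxpos m i) (Real.exp_pos _)).ne' (hZpos m).ne',
        Real.log_mul (hxpos m i).ne' (Real.exp_pos _).ne', Real.log_exp, ih]
      ring
  -- lower bound on ∑ log Z_k
  have hLsum : -Real.log d - t * (∑ k ∈ Finset.range K, ∑ i, g k i * u i)
      ≤ ∑ k ∈ Finset.range K, Real.log (Z k) := by
    have hbound : ∀ i, - Real.log d - ∑ k ∈ Finset.range K, (t * g k i + Real.log (Z k))
        ≤ 0 := by
      intro i
      have := htel i K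
      have hlogle : Real.log (x K i) ≤ 0 := Real.log_nonpos (hxpos K i).le (hxle1 K i)
      rw [Real.log_div one_ne_zero hd'.ne', Real.log_one] at this
      linarith
    have hsum : ∑ i, u i * (- Real.log d - ∑ k ∈ Finset.range K, (t * g k i + Real.log (Z k)))
        ≤ 0 := by
      apply Finset.sum_nonpos
      intro i _
      exact mul_nonpos_of_nonneg_of_nonpos (hu i) (hbound i)
    have hexpand : ∑ i, u i * (- Real.log d - ∑ k ∈ Finset.range K, (t * g k i + Real.log (Z k)))
        = -Real.log d - t * (∑ k ∈ Finset.range K, ∑ i, g k i * u i)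
          - ∑ k ∈ Finset.range K, Real.log (Z k) := by
      have h1 : ∑ i, u i * (- Real.log d - ∑ k ∈ Finset.range K, (t * g k i + Real.log (Z k)))
          = (∑ i, u i * (- Real.log d))
            - ∑ i, u i * ∑ k ∈ Finset.range K, (t * g k i + Real.log (Z k)) := by
        rw [← Finset.sum_sub_distrib]
        exact Finset.sum_congr rfl fun i _ => by ring
      rw [h1, ← Finset.sum_mul, husum, one_mul]
      have h2 : ∑ i, u i * ∑ k ∈ Finset.range K, (t * g k i + Real.log (Z k))
          = ∑ k ∈ Finset.range K, ∑ i, u i * (t * g k i + Real.log (Z k)) := by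
        rw [Finset.sum_comm]
        exact Finset.sum_congr rfl fun i _ => Finset.mul_sum _ _ _
      rw [h2]
      have h3 : ∀ k, ∑ i, u i * (t * g k i + Real.log (Z k))
          = t * (∑ i, g k i * u i) + Real.log (Z k) := by
        intro k
        rw [Finset.mul_sum]
        rw [show (∑ i, u i * (t * g k i + Real.log (Z k)))
          = (∑ i, t * (g k i * u i)) + ∑ i, u i * Real.log (Z k) by
            rw [← Finset.sum_add_distrib]; exact Finset.sum_congr rfl fun i _ => by ring]
        rw [← Finset.sum_mul, husum, one_mul]
      rw [Finset.sum_congr rfl fun k _ => h3 k, Finset.sum_add_distrib,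
        Finset.mul_sum]
      ring
    rw [hexpand] at hsum
    linarith
  -- combine
  have hsumstep : t * (∑ k ∈ Finset.range K, ∑ i, g k i * x k i)
      + ∑ k ∈ Finset.range K, Real.log (Z k)
      ≤ t ^ 2 / 2 * ∑ k ∈ Finset.range K, ∑ i, x k i * (g k i) ^ 2 := by
    rw [Finset.mul_sum, Finset.mul_sum, ← Finset.sum_add_distrib]
    exact Finset.sum_le_sum fun k _ => hstep k
  have hLHS : ∑ k ∈ Finset.range K, ∑ i, g k i * (x k i - u i)
      = (∑ k ∈ Finset.range K, ∑ i, g k i * x k i)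
        - ∑ k ∈ Finset.range K, ∑ i, g k i * u i := by
    rw [← Finset.sum_sub_distrib]
    refine Finset.sum_congr rfl fun k _ => ?_
    rw [← Finset.sum_sub_distrib]
    exact Finset.sum_congr rfl fun i _ => by ring
  rw [hLHS]
  rw [← mul_le_mul_iff_of_pos_left ht]
  have hrt : t * (Real.log d / t + t / 2 * ∑ k ∈ Finset.range K, ∑ i, x k i * (g k i) ^ 2)
      = Real.log d + t ^ 2 / 2 * ∑ k ∈ Finset.range K, ∑ i, x k i * (g k i) ^ 2 := by
    field_simp
  rw [hrt]
  nlinarith [hsumstep, hLsum]
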